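/- No group of order 1152 has abelianization isomorphic to the cyclic group of order 3, and no group of order 800 has abelianization isomorphic to the cyclic group of order 5. -/

import Mathlib

open Subgroup Pointwise
open scoped commutatorElement

section Helpers

variable {G : Type} [Group G]

/-- Surjectivity of `Abelianization.of`. -/
lemma abel_of_surjective : Function.Surjective (Abelianization.of : G →* Abelianization G) := by
  intro y
  obtain ⟨x, hx⟩ := Quot.exists_rep y
  exact ⟨x, by rw [← Abelianization.mk_eq_of, hx]⟩

/-- The abelianization of a quotient is a quotient of the abelianization. -/
lemma card_abelianization_quotient_dvd (N : Subgroup G) [N.Normal] :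
    Nat.card (Abelianization (G ⧸ N)) ∣ Nat.card (Abelianization G) := by
  apply Subgroup.card_dvd_of_surjective (Abelianization.map (QuotientGroup.mk' N))
  intro y
  obtain ⟨q, rfl⟩ := abel_of_surjective y
  obtain ⟨g, rfl⟩ := QuotientGroup.mk'_surjective N q
  exact ⟨Abelianization.of g, Abelianization.map_of _ _⟩

/-- A nontrivial solvable group is not perfect. -/
lemma commutator_ne_top_of_solvable [hs : Group.IsSolvable G] [Nontrivial G] :
    commutator G ≠ ⊤ := by
  intro h
  obtain ⟨n, hn⟩ := hs.solvable
  have key : ∀ m : ℕ, derivedSeries G m = ⊤ := by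
    intro m
    induction m with
    | zero => exact derivedSeries_zero G
    | succ k ih =>
        rw [derivedSeries_succ, ih]
        rw [_root_.commutator_def] at h
        exact h
  rw [key n] at hn
  obtain ⟨x, y, hxy⟩ := exists_pair_ne G
  have hx : x ∈ (⊤ : Subgroup G) := mem_top x
  have hy : y ∈ (⊤ : Subgroup G) := mem_top y
  rw [hn, mem_bot] at hx hy
  exact hxy (hx.trans hy.symm)

/-- nontrivial solvable group has `card (Abelianization) ≠ 1`. -/
lemma card_abelianization_ne_one [Group.IsSolvable G] [Nontrivial G] :
    Nat.card (Abelianization G) ≠ 1 := by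
  intro h
  have : (commutator G).index = 1 := h
  exact commutator_ne_top_of_solvable (Subgroup.index_eq_one.mp this)

/-- A simple group with a proper subgroup of index `k` has cardinality dividing `k!/2`,
provided its cardinality exceeds 2. -/
lemma card_dvd_index_factorial_div_two [Finite G] [IsSimpleGroup G]
    (hG : 2 < Nat.card G) (H : Subgroup G) (hH : H ≠ ⊤) :
    Nat.card G ∣ Nat.factorial H.index / 2 := by
  classical
  letI : Fintype (G ⧸ H) := Fintype.ofFinite _
  let φ := MulAction.toPermHom G (G ⧸ H)
  have hker : φ.ker = H.normalCore := (H.normalCore_eq_ker).symm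
  have hkerne : φ.ker ≠ ⊤ := by
    rw [hker]
    intro h
    have h2 := H.normalCore_le
    rw [h] at h2
    exact hH (top_le_iff.mp h2)
  have hkerbot : φ.ker = ⊥ :=
    ((MonoidHom.normal_ker φ).eq_bot_or_eq_top).resolve_right hkerne
  have hinj : Function.Injective φ := (MonoidHom.ker_eq_bot_iff φ).mp hkerbot
  have hidx : H.index = Fintype.card (G ⧸ H) := by
    rw [Subgroup.index, Nat.card_eq_fintype_card]
  have hXnt : Nontrivial (G ⧸ H) := by
    rw [← Finite.one_lt_card_iff_nontrivial]
    have h1 : H.index ≠ 1 := fun h => hH (Subgroup.index_eq_one.mp h)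
    have h0 : H.index ≠ 0 := Subgroup.index_ne_zero_of_finite
    have : (1 : ℕ) < H.index := by omega
    rwa [Subgroup.index] at this
  let sg : G →* ℤˣ := (Equiv.Perm.sign).comp φ
  rcases (MonoidHom.normal_ker sg).eq_bot_or_eq_top with hbot | htop
  · exfalso
    have hsinj : Function.Injective sg := (MonoidHom.ker_eq_bot_iff sg).mp hbot
    have hdvd := Subgroup.card_dvd_of_injective sg hsinj
    have h2 : Nat.card ℤˣ = 2 := by
      rw [Nat.card_eq_fintype_card]
      decide
    rw [h2] at hdvd
    have := Nat.le_of_dvd (by norm_num) hdvd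
    omega
  · have hmem : ∀ g : G, φ g ∈ alternatingGroup (G ⧸ H) := by
      intro g
      rw [Equiv.Perm.mem_alternatingGroup]
      have : sg g = 1 := by
        have : g ∈ sg.ker := by rw [htop]; trivial
        exact this
      exact this
    let ψ : G →* alternatingGroup (G ⧸ H) := φ.codRestrict _ hmem
    have hψ : Function.Injective ψ := fun a b h => hinj (congrArg Subtype.val h)
    have hdvd := Subgroup.card_dvd_of_injective ψ hψ
    have h2 : 2 * Nat.card (alternatingGroup (G ⧸ H)) = Nat.factorial H.index := by
      rw [Nat.card_eq_fintype_card, two_mul_card_alternatingGroup, hidx, Fintype.card_perm]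
    rw [← h2, Nat.mul_div_cancel_left _ two_pos]
    exact hdvd

end Helpers

section Sylow

variable {G : Type} [Group G] [Finite G]

/-- Cardinality and index of a Sylow subgroup, given a factorization of the group order. -/
lemma sylow_card_index (p : ℕ) [Fact p.Prime] (x m : ℕ) (hm : ¬ p ∣ m) (hmpos : m ≠ 0)
    (hcard : Nat.card G = p ^ x * m) (P : Sylow p G) :
    Nat.card P = p ^ x ∧ (P : Subgroup G).index = m := by
  have hfact : (Nat.card G).factorization p = x := by
    rw [hcard, Nat.factorization_mul (pow_ne_zero _ (Fact.out : p.Prime).pos.ne') hmpos]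
    rw [Nat.Prime.factorization_pow Fact.out]
    simp [Nat.factorization_eq_zero_of_not_dvd hm]
  have h1 : Nat.card P = p ^ x := by
    rw [Sylow.card_eq_multiplicity, hfact]
  refine ⟨h1, ?_⟩
  have h2 : Nat.card (P : Subgroup G) * (P : Subgroup G).index = Nat.card G :=
    Subgroup.card_mul_index _
  rw [h1, hcard] at h2
  exact Nat.eq_of_mul_eq_mul_left (pow_pos (Fact.out : p.Prime).pos x) h2

end Sylow

section Solvability

/-- Groups of order dividing `2^7 * p` for `p ∈ {3, 5}` are solvable. -/
theorem solvable_of_card_dvd (p : ℕ) (hp : p = 3 ∨ p = 5) :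
    ∀ n : ℕ, ∀ (G : Type) [Group G], Nat.card G = n → n ∣ 2 ^ 7 * p → Group.IsSolvable G := by
  have hpp : Nat.Prime p := by rcases hp with rfl | rfl <;> norm_num
  haveI : Fact (Nat.Prime p) := ⟨hpp⟩
  have hpodd : ¬ (2 : ℕ) ∣ p := by rcases hp with rfl | rfl <;> norm_num
  intro n
  induction n using Nat.strong_induction_on with
  | _ n IH =>
  intro G _ hcard hdvd
  have hn0 : n ≠ 0 := by
    rintro rfl
    have : 2 ^ 7 * p = 0 := Nat.eq_zero_of_zero_dvd hdvd
    rcases hp with rfl | rfl <;> norm_num at this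
  haveI : Finite G := Nat.finite_of_card_ne_zero (by rw [hcard]; exact hn0)
  rcases subsingleton_or_nontrivial G with hss | hnt
  · exact isSolvable_of_top_eq_bot G (by ext z; simp [Subsingleton.elim z (1 : G)])
  by_cases hpn : p ∣ n
  swap
  · -- 2-group
    have hcop : Nat.Coprime n p := (Nat.coprime_comm.mp ((Nat.Prime.coprime_iff_not_dvd hpp).mpr hpn))
    have h2 : n ∣ 2 ^ 7 := hcop.dvd_of_dvd_mul_right hdvd
    obtain ⟨k, _, hk⟩ := (Nat.dvd_prime_pow Nat.prime_two).mp h2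
    have hpg : IsPGroup 2 G := IsPGroup.of_card (hcard.trans hk)
    haveI := hpg.isNilpotent
    infer_instance
  by_cases h2n : (2 : ℕ) ∣ n
  swap
  · -- p-group
    have hcop : Nat.Coprime n (2 ^ 7) :=
      Nat.Coprime.pow_right _ (Nat.coprime_comm.mp ((Nat.Prime.coprime_iff_not_dvd Nat.prime_two).mpr h2n))
    have h2 : n ∣ p := by
      have := hdvd
      rw [mul_comm] at this
      exact hcop.dvd_of_dvd_mul_right this
    rcases (Nat.Prime.eq_one_or_self_of_dvd hpp _ h2) with h1 | h1
    · have hpg : IsPGroup p G := IsPGroup.of_card (n := 0) (by rw [hcard, h1, pow_zero])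
      haveI := hpg.isNilpotent
      infer_instance
    · have hpg : IsPGroup p G := IsPGroup.of_card (n := 1) (by rw [hcard, h1, pow_one])
      haveI := hpg.isNilpotent
      infer_instance
  -- now n = 2^x * p with x ≥ 1
  obtain ⟨m, hm⟩ := hpn
  have hmdvd : m ∣ 2 ^ 7 := by
    have h : p * m ∣ p * 2 ^ 7 := by rw [← hm, mul_comm p (2^7)]; exact hdvd
    exact (mul_dvd_mul_iff_left hpp.pos.ne').mp h
  obtain ⟨x, _, hxeq⟩ := (Nat.dvd_prime_pow Nat.prime_two).mp hmdvd
  have hx1 : 1 ≤ x := by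
    by_contra hx
    push_neg at hx
    interval_cases x
    · rw [hxeq] at hm
      simp at hm
      rw [hm] at h2n
      exact hpodd h2n
  have hcard' : Nat.card G = 2 ^ x * p := by rw [hcard, hm, hxeq, mul_comm]
  have h2xpos : (0:ℕ) < 2 ^ x := by positivity
  by_cases hNex : ∃ N : Subgroup G, N.Normal ∧ N ≠ ⊥ ∧ N ≠ ⊤
  · obtain ⟨N, hNn, hNb, hNt⟩ := hNex
    haveI := hNn
    have hprod : Nat.card (G ⧸ N) * Nat.card N = n := by
      rw [← hcard]; exact (Subgroup.card_eq_card_quotient_mul_card_subgroup N).symm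
    have hNpos : 0 < Nat.card N := Nat.card_pos
    have hQpos : 0 < Nat.card (G ⧸ N) := Nat.card_pos
    have hNgt : 1 < Nat.card N := by
      rcases Nat.lt_or_ge 1 (Nat.card N) with h | h
      · exact h
      · exfalso
        have : Nat.card N = 1 := by omega
        exact hNb (Subgroup.eq_bot_of_card_eq N this)
    have hQgt : 1 < Nat.card (G ⧸ N) := by
      have hQ1 : Nat.card (G ⧸ N) ≠ 1 := by
        intro h
        exact hNt (Subgroup.index_eq_one.mp h)
      omega
    have hsN : Group.IsSolvable N := by
      have hlt : Nat.card N < n := by nlinarith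
      exact IH (Nat.card N) hlt N rfl ((Subgroup.card_subgroup_dvd_card N).trans (hcard ▸ hdvd))
    have hsQ : Group.IsSolvable (G ⧸ N) := by
      have hlt : Nat.card (G ⧸ N) < n := by nlinarith
      exact IH (Nat.card (G ⧸ N)) hlt (G ⧸ N) rfl
        ((Subgroup.card_quotient_dvd_card N).trans (hcard ▸ hdvd))
    exact solvable_of_ker_le_range N.subtype (QuotientGroup.mk' N)
      (by rw [QuotientGroup.ker_mk', Subgroup.range_subtype])
  · exfalso
    haveI hSimple : IsSimpleGroup G := ⟨fun N hNn => by
      by_contra hcon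
      push_neg at hcon
      exact hNex ⟨N, hNn, hcon.1, hcon.2⟩⟩
    -- Sylow 2 analysis
    obtain ⟨P⟩ := (inferInstance : Nonempty (Sylow 2 G))
    have h2p : ¬ (2:ℕ) ∣ p := hpodd
    obtain ⟨hPcard, hPidx⟩ := sylow_card_index 2 x p h2p hpp.pos.ne' hcard' P
    have hns : Nat.card (Sylow 2 G) ∣ p := hPidx ▸ Sylow.card_dvd_index P
    rcases (Nat.Prime.eq_one_or_self_of_dvd hpp _ hns) with hn2 | hn2
    · -- Sylow 2 normal
      have hnorm : Subgroup.normalizer ((P : Subgroup G) : Set G) = ⊤ := by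
        have h := Sylow.card_eq_index_normalizer P
        rw [hn2] at h
        exact Subgroup.index_eq_one.mp h.symm
      have hPn : (P : Subgroup G).Normal := Subgroup.normalizer_eq_top_iff.mp hnorm
      rcases hPn.eq_bot_or_eq_top with hb | ht
      · rw [hb] at hPcard
        rw [Subgroup.card_bot] at hPcard
        have : (2:ℕ) ^ 1 ≤ 2 ^ x := Nat.pow_le_pow_right (by norm_num : 0 < 2) hx1
        omega
      · rw [ht] at hPcard
        rw [Subgroup.card_top] at hPcard
        rw [hcard'] at hPcard
        nlinarith [hpp.one_lt, h2xpos]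
    · -- normalizer of Sylow 2 has index p
      have hidxN : (Subgroup.normalizer ((P : Subgroup G) : Set G)).index = p := by
        have h := Sylow.card_eq_index_normalizer P
        rw [hn2] at h
        exact h.symm
      have hNt2 : Subgroup.normalizer ((P : Subgroup G) : Set G) ≠ ⊤ := by
        intro h
        rw [h, Subgroup.index_top] at hidxN
        exact hpp.one_lt.ne hidxN
      have hbig : 2 < Nat.card G := by
        rw [hcard']
        have h1 : (2:ℕ) ≤ 2 ^ x := Nat.pow_le_pow_right (by norm_num : 0 < 2) hx1
        nlinarith [hpp.two_le]
      have hdvd60 := card_dvd_index_factorial_div_two hbig _ hNt2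
      rw [hidxN] at hdvd60
      rcases hp with rfl | rfl
      · -- p = 3 : card G ∣ 3
        have h3 : Nat.factorial 3 / 2 = 3 := by decide
        rw [h3, hcard'] at hdvd60
        have hle := Nat.le_of_dvd (by norm_num) hdvd60
        have h1 : (2:ℕ) ≤ 2 ^ x := Nat.pow_le_pow_right (by norm_num : 0 < 2) hx1
        nlinarith
      · -- p = 5 : card G ∣ 60
        have h5 : Nat.factorial 5 / 2 = 60 := by decide
        rw [h5, hcard'] at hdvd60
        have hxle : x ≤ 2 := by
          by_contra hxgt
          push_neg at hxgt
          have h8 : (2:ℕ)^3 ∣ 2 ^ x := pow_dvd_pow 2 hxgt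
          have h40 : (40:ℕ) ∣ 2 ^ x * 5 := by
            obtain ⟨c, hc⟩ := h8
            exact ⟨c, by rw [hc]; ring⟩
          have := h40.trans hdvd60
          norm_num at this
        -- Sylow 5
        obtain ⟨P5⟩ := (inferInstance : Nonempty (Sylow 5 G))
        have h52 : ¬ (5:ℕ) ∣ 2 ^ x := by
          intro h
          have := Nat.Prime.dvd_of_dvd_pow (by norm_num : Nat.Prime 5) h
          norm_num at this
        obtain ⟨hP5card, hP5idx⟩ := sylow_card_index 5 1 (2 ^ x) h52 (by positivity)
          (by rw [hcard']; ring) P5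
        have hn5dvd : Nat.card (Sylow 5 G) ∣ 2 ^ x := hP5idx ▸ Sylow.card_dvd_index P5
        have hmod := card_sylow_modEq_one 5 G
        have hn5pos : 0 < Nat.card (Sylow 5 G) := Nat.card_pos
        have hn5 : Nat.card (Sylow 5 G) = 1 := by
          have hd4 : Nat.card (Sylow 5 G) ∣ 4 := by
            refine hn5dvd.trans ?_
            have : (2:ℕ) ^ x ∣ 2 ^ 2 := pow_dvd_pow 2 hxle
            exact this
          have hle4 := Nat.le_of_dvd (by norm_num) hd4
          have hmod5 : Nat.card (Sylow 5 G) % 5 = 1 % 5 := hmod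
          omega
        have hnorm : Subgroup.normalizer ((P5 : Subgroup G) : Set G) = ⊤ := by
          have h := Sylow.card_eq_index_normalizer P5
          rw [hn5] at h
          exact Subgroup.index_eq_one.mp h.symm
        have hP5n : (P5 : Subgroup G).Normal := Subgroup.normalizer_eq_top_iff.mp hnorm
        rcases hP5n.eq_bot_or_eq_top with hb | ht
        · rw [hb, Subgroup.card_bot] at hP5card
          norm_num at hP5card
        · rw [ht, Subgroup.card_top, hcard'] at hP5card
          have h1 : (2:ℕ) ≤ 2 ^ x := Nat.pow_le_pow_right (by norm_num : 0 < 2) hx1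
          nlinarith

end Solvability

section Main

/-- No group of order `2^a * p^2` (dividing `2^7 * p^2`), `p ∈ {3,5}`, has abelianization
of cardinality `p`. -/
theorem main_thm (p : ℕ) (hp : p = 3 ∨ p = 5) :
    ∀ n : ℕ, ∀ (G : Type) [Group G], Nat.card G = n → n ∣ 2 ^ 7 * p ^ 2 → p ^ 2 ∣ n →
      Nat.card (Abelianization G) ≠ p := by
  have hpp : Nat.Prime p := by rcases hp with rfl | rfl <;> norm_num
  haveI : Fact (Nat.Prime p) := ⟨hpp⟩
  have hpodd : ¬ (2:ℕ) ∣ p := by rcases hp with rfl | rfl <;> norm_num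
  have hpnd2 : ¬ (p:ℕ) ∣ 2 := by rcases hp with rfl | rfl <;> norm_num
  intro n
  induction n using Nat.strong_induction_on with
  | _ n IH =>
  intro G _ hcard hdvd hp2n hab
  classical
  have hn0 : n ≠ 0 := by
    rintro rfl
    have : 2 ^ 7 * p ^ 2 = 0 := Nat.eq_zero_of_zero_dvd hdvd
    rcases hp with rfl | rfl <;> norm_num at this
  haveI : Finite G := Nat.finite_of_card_ne_zero (by rw [hcard]; exact hn0)
  obtain ⟨m, hm⟩ := hp2n
  have hmdvd : m ∣ 2 ^ 7 := by
    have h : p ^ 2 * m ∣ p ^ 2 * 2 ^ 7 := by rw [← hm, mul_comm (p^2) (2^7)]; exact hdvd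
    exact (mul_dvd_mul_iff_left (pow_ne_zero 2 hpp.pos.ne')).mp h
  obtain ⟨a, ha7, haeq⟩ := (Nat.dvd_prime_pow Nat.prime_two).mp hmdvd
  have hcard' : Nat.card G = 2 ^ a * p ^ 2 := by rw [hcard, hm, haeq, mul_comm]
  rcases Nat.eq_zero_or_pos a with ha0 | hapos
  · -- a = 0 : G commutative of order p², abelianization has card p² ≠ p
    subst ha0
    rw [pow_zero, one_mul] at hcard'
    have hcomm := IsPGroup.commutative_of_card_eq_prime_sq hcard'
    have hKbot : commutator G = ⊥ := by
      rw [_root_.commutator_def, eq_bot_iff]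
      rw [Subgroup.commutator_le]
      intro g1 _ g2 _
      rw [Subgroup.mem_bot]
      exact commutatorElement_eq_one_iff_commute.mpr (hcomm g1 g2)
    have hidx : (commutator G).index = p := hab
    rw [hKbot, Subgroup.index_bot, hcard'] at hidx
    nlinarith [hpp.two_le]
  -- now a ≥ 1
  have hKidx : (commutator G).index = p := hab
  have hKcard : Nat.card (commutator G) = 2 ^ a * p := by
    have h := Subgroup.card_mul_index (commutator G)
    rw [hKidx, hcard'] at h
    have h2 : (2 ^ a * p) * p = 2 ^ a * p ^ 2 := by ring
    rw [← h2] at h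
    exact Nat.eq_of_mul_eq_mul_right hpp.pos h
  haveI hsolvK : Group.IsSolvable (commutator G) := by
    apply solvable_of_card_dvd p hp (Nat.card (commutator G)) _ rfl
    rw [hKcard]
    exact mul_dvd_mul (pow_dvd_pow 2 ha7) dvd_rfl
  have h2a2 : (2:ℕ) ≤ 2 ^ a := by
    calc (2:ℕ) = 2 ^ 1 := (pow_one 2).symm
    _ ≤ 2 ^ a := Nat.pow_le_pow_right (by norm_num) hapos
  haveI hntK : Nontrivial (commutator G) := by
    apply Finite.one_lt_card_iff_nontrivial.mp
    rw [hKcard]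
    nlinarith [hpp.two_le]
  by_cases hT2 : ∃ T : Subgroup G, T.Normal ∧ IsPGroup 2 T ∧ T ≠ ⊥
  · -- Case A: quotient by a nontrivial normal 2-subgroup
    obtain ⟨T, hTn, hT2g, hTb⟩ := hT2
    haveI := hTn
    obtain ⟨t, hTcard⟩ := (IsPGroup.iff_card (p := 2)).mp hT2g
    have ht1 : 1 ≤ t := by
      rcases Nat.eq_zero_or_pos t with rfl | h
      · exfalso
        rw [pow_zero] at hTcard
        exact hTb (Subgroup.eq_bot_of_card_eq T hTcard)
      · exact h
    have hQcard : Nat.card (G ⧸ T) * 2 ^ t = n := by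
      rw [← hTcard, ← hcard]
      exact (Subgroup.card_eq_card_quotient_mul_card_subgroup T).symm
    have h2t2 : (2:ℕ) ≤ 2 ^ t := by
      calc (2:ℕ) = 2 ^ 1 := (pow_one 2).symm
      _ ≤ 2 ^ t := Nat.pow_le_pow_right (by norm_num) ht1
    have hQpos : 0 < Nat.card (G ⧸ T) := Nat.card_pos
    have hQlt : Nat.card (G ⧸ T) < n := by nlinarith
    have hQdvd : Nat.card (G ⧸ T) ∣ 2 ^ 7 * p ^ 2 :=
      (Subgroup.card_quotient_dvd_card T).trans (hcard ▸ hdvd)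
    have hQp2 : p ^ 2 ∣ Nat.card (G ⧸ T) := by
      have hcop : Nat.Coprime (p ^ 2) (2 ^ t) :=
        Nat.Coprime.pow _ _ ((Nat.Prime.coprime_iff_not_dvd hpp).mpr hpnd2)
      have h : p ^ 2 ∣ Nat.card (G ⧸ T) * 2 ^ t := by
        rw [hQcard, ← hcard]
        exact hcard ▸ (hm ▸ Dvd.intro m rfl)
      exact (Nat.Coprime.dvd_of_dvd_mul_right hcop) h
    have hcQ := card_abelianization_quotient_dvd T
    rw [hab] at hcQ
    rcases (hpp.eq_one_or_self_of_dvd _ hcQ) with hc1 | hcp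
    · -- quotient is perfect: then T surjects onto G/K, so p ∣ 2^t, absurd
      have htop : commutator (G ⧸ T) = ⊤ := Subgroup.index_eq_one.mp hc1
      have hmapc : Subgroup.map (QuotientGroup.mk' T) (commutator G) = ⊤ := by
        rw [_root_.commutator_def, Subgroup.map_commutator,
          Subgroup.map_top_of_surjective _ (QuotientGroup.mk'_surjective T)]
        rw [_root_.commutator_def] at htop
        exact htop
      have hsup : commutator G ⊔ T = ⊤ := by
        have h := Subgroup.comap_map_eq (QuotientGroup.mk' T) (commutator G)
        rw [hmapc, QuotientGroup.ker_mk', Subgroup.comap_top] at h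
        exact h.symm
      have hmapbot : Subgroup.map (QuotientGroup.mk' (commutator G)) (commutator G) = ⊥ := by
        rw [eq_bot_iff]
        rintro y ⟨z, hz, rfl⟩
        rw [Subgroup.mem_bot]
        rwa [← MonoidHom.mem_ker, QuotientGroup.ker_mk']
      have hsurjT : Subgroup.map (QuotientGroup.mk' (commutator G)) T = ⊤ := by
        have h1 : Subgroup.map (QuotientGroup.mk' (commutator G)) (commutator G ⊔ T) = ⊤ := by
          rw [hsup]
          exact Subgroup.map_top_of_surjective _ (QuotientGroup.mk'_surjective _)
        rw [Subgroup.map_sup, hmapbot, bot_sup_eq] at h1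
        exact h1
      have hsurj : Function.Surjective ((QuotientGroup.mk' (commutator G)).comp T.subtype) := by
        rw [← MonoidHom.range_eq_top, MonoidHom.range_comp, Subgroup.range_subtype]
        exact hsurjT
      have hdvdT := Subgroup.card_dvd_of_surjective _ hsurj
      have hcardQK : Nat.card (G ⧸ commutator G) = p := hKidx
      rw [hcardQK, hTcard] at hdvdT
      exact hpnd2 (hpp.dvd_of_dvd_pow hdvdT)
    · exact IH _ hQlt _ rfl hQdvd hQp2 hcp
  · -- Case B : no nontrivial normal 2-subgroup
    push_neg at hT2
    have hno : ∀ T : Subgroup G, T.Normal → IsPGroup 2 T → T = ⊥ := hT2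
    haveI hntG : Nontrivial G := by
      apply Finite.one_lt_card_iff_nontrivial.mp
      rw [hcard']
      nlinarith [hpp.two_le]
    haveI hsolvQK : Group.IsSolvable (G ⧸ commutator G) := by
      have hcq : Nat.card (G ⧸ commutator G) = p := hKidx
      have hpg : IsPGroup p (G ⧸ commutator G) := IsPGroup.of_card (n := 1) (by rw [hcq, pow_one])
      haveI : Finite (G ⧸ commutator G) := Nat.finite_of_card_ne_zero (by rw [hcq]; exact hpp.pos.ne')
      haveI := hpg.isNilpotent
      infer_instance
    haveI hsolvG : Group.IsSolvable G :=
      solvable_of_ker_le_range (commutator G).subtype (QuotientGroup.mk' (commutator G))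
        (by rw [QuotientGroup.ker_mk', Subgroup.range_subtype])
    -- find the last nontrivial term of the derived series
    have hex : ∃ k, derivedSeries G k = ⊥ := hsolvG.solvable
    let k := Nat.find hex
    have hkspec : derivedSeries G k = ⊥ := Nat.find_spec hex
    have hk0 : k ≠ 0 := by
      intro h
      have := hkspec
      rw [h, derivedSeries_zero] at this
      obtain ⟨u, v, huv⟩ := exists_pair_ne G
      have hu : u ∈ (⊤ : Subgroup G) := Subgroup.mem_top u
      have hv : v ∈ (⊤ : Subgroup G) := Subgroup.mem_top v
      rw [this, Subgroup.mem_bot] at hu hv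
      exact huv (hu.trans hv.symm)
    have hkpos : 0 < k := Nat.pos_of_ne_zero hk0
    have hAne : derivedSeries G (k-1) ≠ ⊥ := Nat.find_min hex (by omega)
    have hAcommbot : ⁅derivedSeries G (k-1), derivedSeries G (k-1)⁆ = ⊥ := by
      have h := hkspec
      rw [← Nat.succ_pred_eq_of_pos hkpos, derivedSeries_succ] at h
      exact h
    set A := derivedSeries G (k-1) with hAdef
    haveI hAnormal : A.Normal := derivedSeries_normal G (k-1)
    have hAcomm : ∀ x ∈ A, ∀ y ∈ A, x * y = y * x := by
      intro x hx y hy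
      have h : ⁅x, y⁆ ∈ ⁅A, A⁆ := Subgroup.commutator_mem_commutator hx hy
      rw [hAcommbot, Subgroup.mem_bot] at h
      exact commutatorElement_eq_one_iff_commute.mp h
    -- T := 2-torsion of A is a normal 2-subgroup, hence trivial
    let T : Subgroup G :=
      { carrier := {g | g ∈ A ∧ g ^ (2 ^ a) = 1}
        one_mem' := ⟨A.one_mem, one_pow _⟩
        mul_mem' := by
          rintro u v ⟨huA, hu⟩ ⟨hvA, hv⟩
          refine ⟨A.mul_mem huA hvA, ?_⟩
          rw [Commute.mul_pow (hAcomm u huA v hvA), hu, hv, one_mul]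
        inv_mem' := by
          rintro u ⟨huA, hu⟩
          exact ⟨A.inv_mem huA, by rw [inv_pow, hu, inv_one]⟩ }
    have hTnormal : T.Normal := by
      constructor
      rintro u ⟨huA, hu⟩ g
      refine ⟨hAnormal.conj_mem u huA g, ?_⟩
      have h : (g * u * g⁻¹) ^ (2 ^ a) = g * u ^ (2 ^ a) * g⁻¹ := by
        induction (2^a) with
        | zero => simp
        | succ kkk ih => rw [pow_succ, pow_succ, ih]; group
      rw [h, hu]
      group
    have hTbot : T = ⊥ := by
      apply hno T hTnormal
      intro x
      exact ⟨a, Subtype.ext (by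
        have hx2 := x.2.2
        calc ((x : G) ^ 2 ^ a : G) = 1 := hx2)⟩
    -- A is a p-group
    have hApow : ∀ x ∈ A, x ^ (p ^ 2) = 1 := by
      intro x hx
      have hmem : x ^ (p ^ 2) ∈ A := A.pow_mem hx _
      have hpow : (x ^ (p ^ 2)) ^ (2 ^ a) = 1 := by
        rw [← pow_mul]
        have hc : x ^ (Nat.card G) = 1 := pow_card_eq_one'
        rw [hcard'] at hc
        rw [mul_comm]
        exact hc
      have hT : x ^ (p ^ 2) ∈ T := ⟨hmem, hpow⟩
      rw [hTbot, Subgroup.mem_bot] at hT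
      exact hT
    have hApg : IsPGroup p A := by
      intro x
      refine ⟨2, Subtype.ext ?_⟩
      have := hApow x.1 x.2
      simpa using this
    obtain ⟨kk, hAcard⟩ := (IsPGroup.iff_card).mp hApg
    have hkkpos : kk ≠ 0 := by
      intro h
      rw [h, pow_zero] at hAcard
      exact hAne (Subgroup.eq_bot_of_card_eq _ hAcard)
    have hkk2 : kk ≤ 2 := by
      have hdvdA : p ^ kk ∣ 2 ^ a * p ^ 2 := by
        rw [← hAcard, ← hcard']
        exact Subgroup.card_subgroup_dvd_card A
      have hcop : Nat.Coprime (p ^ kk) (2 ^ a) :=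
        Nat.Coprime.pow _ _ ((Nat.Prime.coprime_iff_not_dvd hpp).mpr hpnd2)
      have h : p ^ kk ∣ p ^ 2 := by
        rw [mul_comm] at hdvdA
        exact hcop.dvd_of_dvd_mul_right hdvdA
      exact (Nat.pow_dvd_pow_iff_le_right hpp.one_lt).mp h
    rcases (show kk = 2 ∨ kk = 1 by omega) with hkk | hkk
    · -- A is a normal Sylow p-subgroup; quotient is a nontrivial perfect 2-group: absurd
      subst hkk
      have hQA : Nat.card (G ⧸ A) * p ^ 2 = n := by
        rw [← hAcard, ← hcard]
        exact (Subgroup.card_eq_card_quotient_mul_card_subgroup A).symm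
      have hQAcard : Nat.card (G ⧸ A) = 2 ^ a := by
        apply Nat.eq_of_mul_eq_mul_right (pow_pos hpp.pos 2)
        rw [hQA, ← hcard, hcard']
      have hpgQ : IsPGroup 2 (G ⧸ A) := IsPGroup.of_card hQAcard
      haveI : Finite (G ⧸ A) := Quotient.finite _
      haveI := hpgQ.isNilpotent
      haveI : Group.IsSolvable (G ⧸ A) := inferInstance
      haveI : Nontrivial (G ⧸ A) := by
        apply Finite.one_lt_card_iff_nontrivial.mp
        rw [hQAcard]; omega
      have hcQ := card_abelianization_quotient_dvd A
      rw [hab] at hcQ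
      have hcQ2 : Nat.card (Abelianization (G ⧸ A)) ∣ 2 ^ a := by
        have := Subgroup.index_dvd_card (commutator (G ⧸ A))
        rw [hQAcard] at this
        exact this
      have hcop : Nat.Coprime p (2 ^ a) :=
        Nat.Coprime.pow_right _ ((Nat.Prime.coprime_iff_not_dvd hpp).mpr hpnd2)
      have h1 : Nat.card (Abelianization (G ⧸ A)) = 1 :=
        Nat.dvd_one.mp (hcop ▸ Nat.dvd_gcd hcQ hcQ2)
      exact card_abelianization_ne_one h1
    · -- card A = p : A is central
      subst hkk
      rw [pow_one] at hAcard
      obtain ⟨Q, hAQ⟩ := hApg.exists_le_sylow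
      have hp2a : ¬ p ∣ 2 ^ a := fun h => hpnd2 (hpp.dvd_of_dvd_pow h)
      obtain ⟨hQcard, hQidx⟩ := sylow_card_index p 2 (2 ^ a) hp2a (pow_ne_zero a two_ne_zero)
        (by rw [hcard']; ring) Q
      have hQcomm := IsPGroup.commutative_of_card_eq_prime_sq hQcard
      set C := Subgroup.centralizer (A : Set G) with hCdef
      have hQC : (Q : Subgroup G) ≤ C := by
        intro q hq
        rw [Subgroup.mem_centralizer_iff]
        intro h hh
        have hhQ : h ∈ Q := hAQ hh
        have hcm := hQcomm ⟨h, hhQ⟩ ⟨q, hq⟩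
        exact congrArg Subtype.val hcm
      haveI hCn : C.Normal := by
        constructor
        intro c hc g
        rw [Subgroup.mem_centralizer_iff] at hc ⊢
        intro h hh
        have hh' : g⁻¹ * h * g ∈ A := by
          have := hAnormal.conj_mem h hh g⁻¹
          rwa [inv_inv] at this
        have hcomm := hc _ hh'
        calc h * (g * c * g⁻¹) = g * ((g⁻¹ * h * g) * c) * g⁻¹ := by group
        _ = g * (c * (g⁻¹ * h * g)) * g⁻¹ := by rw [hcomm]
        _ = (g * c * g⁻¹) * h := by group
      have hCcardp2 : p ^ 2 ∣ Nat.card C := by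
        rw [← hQcard]
        exact Subgroup.card_dvd_of_le hQC
      have hCquot : Nat.card (G ⧸ C) ∣ 2 ^ a := by
        have hprod : Nat.card (G ⧸ C) * Nat.card C = n := by
          rw [← hcard]
          exact (Subgroup.card_eq_card_quotient_mul_card_subgroup C).symm
        obtain ⟨d, hd⟩ := hCcardp2
        refine ⟨d, ?_⟩
        have h2 : n = 2 ^ a * p ^ 2 := by rw [← hcard, hcard']
        apply Nat.eq_of_mul_eq_mul_right (pow_pos hpp.pos 2)
        calc 2 ^ a * p ^ 2 = n := h2.symm
        _ = Nat.card (G ⧸ C) * Nat.card C := hprod.symm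
        _ = Nat.card (G ⧸ C) * (p ^ 2 * d) := by rw [hd]
        _ = Nat.card (G ⧸ C) * d * p ^ 2 := by ring
      have hCtop : C = ⊤ := by
        by_contra hCne
        have hc1 : Nat.card (G ⧸ C) ≠ 1 := fun h => hCne (Subgroup.index_eq_one.mp h)
        obtain ⟨j, _, hjeq⟩ := (Nat.dvd_prime_pow Nat.prime_two).mp hCquot
        haveI : Finite (G ⧸ C) := Quotient.finite _
        have hpgQ : IsPGroup 2 (G ⧸ C) := IsPGroup.of_card hjeq
        haveI := hpgQ.isNilpotent
        haveI : Group.IsSolvable (G ⧸ C) := inferInstance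
        haveI : Nontrivial (G ⧸ C) := by
          apply Finite.one_lt_card_iff_nontrivial.mp
          have := Nat.card_pos (α := G ⧸ C)
          omega
        have hcQ := card_abelianization_quotient_dvd C
        rw [hab] at hcQ
        have hcQ2 : Nat.card (Abelianization (G ⧸ C)) ∣ 2 ^ j := by
          have := Subgroup.index_dvd_card (commutator (G ⧸ C))
          rw [hjeq] at this
          exact this
        have hcop : Nat.Coprime p (2 ^ j) :=
          Nat.Coprime.pow_right _ ((Nat.Prime.coprime_iff_not_dvd hpp).mpr hpnd2)
        have h1 : Nat.card (Abelianization (G ⧸ C)) = 1 :=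
          Nat.dvd_one.mp (hcop ▸ Nat.dvd_gcd hcQ hcQ2)
        exact card_abelianization_ne_one h1
      have hAcentral : ∀ x ∈ A, ∀ g : G, x * g = g * x := by
        intro x hx g
        have hg : g ∈ C := by rw [hCtop]; trivial
        exact (Subgroup.mem_centralizer_iff.mp hg) x hx
      by_cases hAK : A ≤ commutator G
      · -- Burnside transfer in K: normal 2-complement, normal in G: contradiction
        have hA'card : Nat.card (A.subgroupOf (commutator G)) = p := by
          rw [Nat.card_congr (Subgroup.subgroupOfEquivOfLe hAK).toEquiv]
          exact hAcard
        have hfact : (Nat.card ↥(commutator G)).factorization p = 1 := by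
          rw [hKcard, Nat.factorization_mul (pow_ne_zero a two_ne_zero) hpp.pos.ne']
          have h1 : ((2:ℕ) ^ a).factorization p = 0 :=
            Nat.factorization_eq_zero_of_not_dvd (fun h => hpnd2 (hpp.dvd_of_dvd_pow h))
          have h2 : (p).factorization p = 1 := Nat.Prime.factorization_self hpp
          simp [h1, h2, Nat.factorization_eq_zero_of_not_dvd hpnd2]
        let S : Sylow p ↥(commutator G) := Sylow.ofCard (A.subgroupOf (commutator G))
          (by rw [hA'card, hfact, pow_one])
        have hSA : (S : Subgroup ↥(commutator G)) = A.subgroupOf (commutator G) := rfl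
        have hPc : Subgroup.normalizer ((S : Subgroup ↥(commutator G)) : Set ↥(commutator G)) ≤
            Subgroup.centralizer (S : Set ↥(commutator G)) := by
          intro y _
          rw [Subgroup.mem_centralizer_iff]
          intro h hh
          have hhA : (h : G) ∈ A := by
            have : h ∈ A.subgroupOf (commutator G) := hh
            exact Subgroup.mem_subgroupOf.mp this
          exact Subtype.ext (hAcentral _ hhA (y : G))

        set M := (MonoidHom.transferSylow S hPc).ker with hMdef
        have hcompl := MonoidHom.ker_transferSylow_isComplement' S hPc
        have hMcard : Nat.card M = 2 ^ a := by
          have h := hcompl.card_mul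
          have hScard : Nat.card (S : Subgroup ↥(commutator G)) = p := by
            rw [hSA]; exact hA'card
          rw [hScard, hKcard] at h
          exact Nat.eq_of_mul_eq_mul_right hpp.pos h
        have hMidx : (M : Subgroup ↥(commutator G)).index = p := by
          have h := Subgroup.card_mul_index (M : Subgroup ↥(commutator G))
          rw [hMcard, hKcard] at h
          exact Nat.eq_of_mul_eq_mul_left (by positivity) h
        have hMchar : ∀ y : ↥(commutator G), y ^ (2 ^ a) = 1 → y ∈ M := by
          intro y hy
          have h1 : (QuotientGroup.mk' M y) ^ (2 ^ a) = 1 := by rw [← map_pow, hy, map_one]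
          have h2 : (QuotientGroup.mk' M y) ^ p = 1 := by
            have h := pow_card_eq_one' (x := QuotientGroup.mk' M y)
            rwa [show Nat.card (↥(commutator G) ⧸ M) = p from hMidx] at h
          have hord : orderOf (QuotientGroup.mk' M y) ∣ Nat.gcd (2 ^ a) p :=
            Nat.dvd_gcd (orderOf_dvd_of_pow_eq_one h1) (orderOf_dvd_of_pow_eq_one h2)
          have hgcd : Nat.gcd (2 ^ a) p = 1 :=
            Nat.Coprime.pow_left _ ((Nat.Prime.coprime_iff_not_dvd Nat.prime_two).mpr hpodd)
          rw [hgcd, Nat.dvd_one] at hord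
          have hone := orderOf_eq_one_iff.mp hord
          rw [← QuotientGroup.ker_mk' (M : Subgroup ↥(commutator G))]
          exact MonoidHom.mem_ker.mpr hone
        set M' := Subgroup.map (commutator G).subtype M with hM'def
        have hM'card : Nat.card M' = 2 ^ a := by
          rw [← hMcard]
          exact (Nat.card_congr (Subgroup.equivMapOfInjective M _
            (commutator G).subtype_injective).toEquiv).symm
        have hM'normal : M'.Normal := by
          constructor
          rintro x ⟨y, hyM, rfl⟩ g
          have hgK : g * ((commutator G).subtype y) * g⁻¹ ∈ commutator G :=
            (Subgroup.commutator_normal ⊤ ⊤).conj_mem _ y.2 g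
          have hy2a : ((commutator G).subtype y) ^ (2 ^ a) = 1 := by
            have hz : (⟨y, hyM⟩ : M) ^ (2 ^ a) = 1 := by
              have h := pow_card_eq_one' (x := (⟨y, hyM⟩ : M))
              rwa [hMcard] at h
            have := congrArg (fun z : M => ((commutator G).subtype (z : ↥(commutator G)))) hz
            simpa using this
          have hpow : (g * ((commutator G).subtype y) * g⁻¹) ^ (2 ^ a) = 1 := by
            have h : (g * ((commutator G).subtype y) * g⁻¹) ^ (2 ^ a)
                = g * ((commutator G).subtype y) ^ (2 ^ a) * g⁻¹ := by
              induction (2 ^ a) with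
              | zero => simp
              | succ kkk ih => rw [pow_succ, pow_succ, ih]; group
            rw [h, hy2a]
            group
          refine ⟨⟨g * ((commutator G).subtype y) * g⁻¹, hgK⟩, hMchar _ (Subtype.ext ?_), rfl⟩
          calc (((⟨g * ((commutator G).subtype y) * g⁻¹, hgK⟩ : ↥(commutator G)) ^ (2 ^ a) :
              ↥(commutator G)) : G)
              = (g * ((commutator G).subtype y) * g⁻¹) ^ (2 ^ a) := by
                rw [Subgroup.coe_pow]
          _ = 1 := hpow
        have hM'pg : IsPGroup 2 M' := IsPGroup.of_card hM'card
        have hM'bot := hno M' hM'normal hM'pg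
        rw [hM'bot, Subgroup.card_bot] at hM'card
        omega
      · -- K is perfect, contradicting solvability
        have hsup : commutator G ⊔ A = ⊤ := by
          have hle : commutator G ≤ commutator G ⊔ A := le_sup_left
          have hidxd : (commutator G ⊔ A).index ∣ p := hKidx ▸ Subgroup.index_dvd_of_le hle
          rcases (hpp.eq_one_or_self_of_dvd _ hidxd) with h1 | hps
          · exact Subgroup.index_eq_one.mp h1
          · exfalso
            have hcardeq : Nat.card (commutator G ⊔ A : Subgroup G) ≤
                Nat.card (commutator G) := by
              have h1 := Subgroup.card_mul_index (commutator G)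
              have h2 := Subgroup.card_mul_index (commutator G ⊔ A)
              rw [hKidx] at h1
              rw [hps] at h2
              exact (Nat.eq_of_mul_eq_mul_right hpp.pos (h2.trans h1.symm)).le
            have heq := Subgroup.eq_of_le_of_card_ge hle hcardeq
            exact hAK (le_sup_right.trans heq.symm.le)
        have lem1 : ∀ (kk g aa : G), (∀ x, aa * x = x * aa) → ⁅kk * aa, g⁆ = ⁅kk, g⁆ := by
          intro kk g aa hc
          rw [commutatorElement_def, commutatorElement_def]
          calc kk * aa * g * (kk * aa)⁻¹ * g⁻¹ = kk * (aa * g) * (aa⁻¹ * kk⁻¹) * g⁻¹ := by group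
          _ = kk * (g * aa) * (aa⁻¹ * kk⁻¹) * g⁻¹ := by rw [hc g]
          _ = kk * g * kk⁻¹ * g⁻¹ := by group
        have lem2 : ∀ (g kk aa : G), (∀ x, aa * x = x * aa) → ⁅g, kk * aa⁆ = ⁅g, kk⁆ := by
          intro g kk aa hc
          rw [commutatorElement_def, commutatorElement_def]
          calc g * (kk * aa) * g⁻¹ * (kk * aa)⁻¹ = g * kk * (aa * g⁻¹) * (aa⁻¹ * kk⁻¹) := by group
          _ = g * kk * (g⁻¹ * aa) * (aa⁻¹ * kk⁻¹) := by rw [hc g⁻¹]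
          _ = g * kk * g⁻¹ * kk⁻¹ := by group
        set K0 : Subgroup G :=
          Subgroup.map (commutator G).subtype (commutator ↥(commutator G)) with hK0def
        have hK0le : K0 ≤ commutator G := by
          rintro x ⟨y, _, rfl⟩
          exact y.2
        have hcomm_le : commutator G ≤ K0 := by
          rw [_root_.commutator_def, Subgroup.commutator_le]
          intro g1 _ g2 _
          have hg1 : g1 ∈ (commutator G : Set G) * (A : Set G) := by
            rw [← Subgroup.mul_normal, hsup]; trivial
          have hg2 : g2 ∈ (commutator G : Set G) * (A : Set G) := by
            rw [← Subgroup.mul_normal, hsup]; trivial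
          obtain ⟨k1, hk1, a1, ha1, rfl⟩ := hg1
          obtain ⟨k2, hk2, a2, ha2, rfl⟩ := hg2
          rw [lem1 _ _ _ (fun x => hAcentral a1 ha1 x), lem2 _ _ _ (fun x => hAcentral a2 ha2 x)]
          exact ⟨⁅(⟨k1, hk1⟩ : ↥(commutator G)), (⟨k2, hk2⟩ : ↥(commutator G))⁆,
            Subgroup.commutator_mem_commutator (Subgroup.mem_top _) (Subgroup.mem_top _), rfl⟩
        have hK0K : K0 = commutator G := by
          have h1 : (commutator G).index ∣ K0.index := Subgroup.index_dvd_of_le hK0le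
          have h2 : K0.index ∣ (commutator G).index := Subgroup.index_dvd_of_le hcomm_le
          have hidxeq : K0.index = (commutator G).index := Nat.dvd_antisymm h2 h1
          have hcardle : Nat.card (commutator G) ≤ Nat.card K0 := by
            have ha := Subgroup.card_mul_index K0
            have hb := Subgroup.card_mul_index (commutator G)
            rw [hidxeq] at ha
            have hpos : 0 < (commutator G).index := by rw [hKidx]; exact hpp.pos
            exact (Nat.eq_of_mul_eq_mul_right hpos (hb.trans ha.symm)).le
          exact Subgroup.eq_of_le_of_card_ge hK0le hcardle
        have hKtop : commutator ↥(commutator G) = ⊤ := by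
          apply Subgroup.map_injective (commutator G).subtype_injective
          have hmt : Subgroup.map (commutator G).subtype ⊤ = commutator G := by
            rw [← MonoidHom.range_eq_map, Subgroup.range_subtype]
          rw [hmt, ← hK0def]
          exact hK0K
        exact commutator_ne_top_of_solvable hKtop

end Main

theorem stmt_17 :
    (∀ (G : Type) [Group G], Nat.card G = 1152 →
      IsEmpty (Abelianization G ≃* Multiplicative (ZMod 3))) ∧
    (∀ (G : Type) [Group G], Nat.card G = 800 →
      IsEmpty (Abelianization G ≃* Multiplicative (ZMod 5))) := by
  constructor
  · intro G _ hG
    constructor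
    intro e
    have hc : Nat.card (Abelianization G) = 3 := by
      rw [Nat.card_congr e.toEquiv, Nat.card_eq_fintype_card]; rfl
    exact main_thm 3 (Or.inl rfl) 1152 G hG (by norm_num) (by norm_num) hc
  · intro G _ hG
    constructor
    intro e
    have hc : Nat.card (Abelianization G) = 5 := by
      rw [Nat.card_congr e.toEquiv, Nat.card_eq_fintype_card]; rfl
    exact main_thm 5 (Or.inr rfl) 800 G hG (by norm_num) (by norm_num) hc
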